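/- A linearly ordered Abelian group A admits a non-trivial strongly decreasing sequence if and only if there exist elements a_0, a_1, a_2, ... in A with a_0 > 0 and 4 · a_{i+1} ≥ a_i ≥ 2 · a_{i+1} for all i. (Any strongly decreasing sequence can be refined so that all ratios n_i may be taken equal to 4, by interpolating elements 2·a_{i+1} when a_i > 4·a_{i+1}.) -/

import Mathlib

theorem strongly_decreasing_iff_ratio_four {α : Type*} [AddCommGroup α] [LinearOrder α] [IsOrderedAddMonoid α] :
    (∃ a : ℕ → α, (¬ ∀ i, a i = 0) ∧
      ∀ i, ∃ n : ℕ, 4 ≤ n ∧ a i ≤ n • a (i + 1) ∧ 2 • a (i + 1) ≤ a i) ↔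
    (∃ a : ℕ → α, 0 < a 0 ∧
      ∀ i, a i ≤ 4 • a (i + 1) ∧ 2 • a (i + 1) ≤ a i) := by
  classical
  constructor
  · rintro ⟨a, hne, h⟩
    choose n hn4 hle hge using h
    -- all terms are nonnegative
    have hnonneg : ∀ i, 0 ≤ a i := by
      intro i
      by_contra hlt
      push_neg at hlt
      have h1 : a (i + 1) < 0 := by
        by_contra h2
        push_neg at h2
        exact absurd (le_trans (nsmul_nonneg h2 2) (hge i)) (not_le.mpr hlt)
      have h2 : (n i) • a (i + 1) ≤ 2 • a (i + 1) :=
        nsmul_le_nsmul_left_of_nonpos h1.le (by have := hn4 i; omega)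
      have h4 : a i = 2 • a (i + 1) := le_antisymm (le_trans (hle i) h2) (hge i)
      have h5 : (n i) • a (i + 1) = 2 • a (i + 1) := le_antisymm h2 (h4 ▸ hle i)
      have h6 : (n i) • a (i + 1) < 2 • a (i + 1) := by
        have hneg : ((n i - 2) : ℕ) • a (i + 1) < 0 := nsmul_neg h1 (by have := hn4 i; omega)
        have heq : (n i) • a (i + 1) = 2 • a (i + 1) + ((n i - 2) : ℕ) • a (i + 1) := by
          rw [← add_nsmul]; congr 1; have := hn4 i; omega
        rw [heq]
        exact add_lt_of_neg_right _ hneg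
      exact absurd h5 (ne_of_lt h6)
    -- zero propagates both ways, hence all terms are positive
    have hzero : ∀ i, a i = 0 ↔ a 0 = 0 := by
      intro i
      induction i with
      | zero => rfl
      | succ i ih =>
        rw [← ih]
        constructor
        · intro hz
          have h1 : a i ≤ (n i) • a (i + 1) := hle i
          rw [hz, smul_zero] at h1
          exact le_antisymm h1 (hnonneg i)
        · intro hz
          have h1 : 2 • a (i + 1) ≤ 0 := hz ▸ hge i
          have h3 : 2 • a (i + 1) = 0 := le_antisymm h1 (nsmul_nonneg (hnonneg (i + 1)) 2)
          rcases lt_or_eq_of_le (hnonneg (i + 1)) with h4 | h4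
          · exact absurd h3 (ne_of_gt (nsmul_pos h4 two_ne_zero))
          · exact h4.symm
    have ha0 : a 0 ≠ 0 := fun hz => hne fun i => (hzero i).mpr hz
    have hpos : ∀ i, 0 < a i := fun i =>
      lt_of_le_of_ne (hnonneg i) (Ne.symm fun hz => ha0 ((hzero i).mp hz))
    -- k i : the largest power of two with 2^(k i) • a (i+1) ≤ a i
    set P : ℕ → ℕ → Prop := fun i m => 2 ^ m • a (i + 1) ≤ a i with hP
    have hP1 : ∀ i, P i 1 := by
      intro i
      show 2 ^ 1 • a (i + 1) ≤ a i
      simpa using hge i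
    set k : ℕ → ℕ := fun i => Nat.findGreatest (P i) (n i) with hk
    have hk1 : ∀ i, 1 ≤ k i := fun i => Nat.le_findGreatest (by have := hn4 i; omega) (hP1 i)
    have hkspec : ∀ i, 2 ^ (k i) • a (i + 1) ≤ a i := fun i =>
      Nat.findGreatest_spec (m := 1) (by have := hn4 i; omega) (hP1 i)
    have hklt : ∀ i, k i < n i := by
      intro i
      have h1 : 2 ^ (k i) • a (i + 1) ≤ (n i) • a (i + 1) :=
        le_trans (hkspec i) (hle i)
      have h2 : 2 ^ (k i) ≤ n i :=
        (nsmul_le_nsmul_iff_left (hpos (i + 1))).mp h1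
      have h3 : k i < 2 ^ (k i) := Nat.lt_two_pow_self (n := k i)
      omega
    have hkmax : ∀ i, a i < 2 ^ (k i + 1) • a (i + 1) := by
      intro i
      have := Nat.findGreatest_is_greatest (P := P i) (n := n i) (k := k i + 1)
        (Nat.lt_succ_self _) (by have := hklt i; omega)
      exact not_le.mp this
    -- the interpolated sequence, as iteration of a step function on states
    set step : ℕ × ℕ → ℕ × ℕ := fun s => if s.2 ≤ 1 then (s.1 + 1, k (s.1 + 1))
      else (s.1, s.2 - 1) with hstep
    set val : ℕ × ℕ → α := fun p => if p.2 = k p.1 then a p.1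
      else 2 ^ p.2 • a (p.1 + 1) with hval
    set s : ℕ → ℕ × ℕ := fun m => step^[m] (0, k 0) with hs
    have hinv : ∀ m, 1 ≤ (s m).2 ∧ (s m).2 ≤ k (s m).1 := by
      intro m
      induction m with
      | zero => exact ⟨hk1 0, le_refl _⟩
      | succ m ih =>
        have : s (m + 1) = step (s m) := Function.iterate_succ_apply' _ _ _
        rw [this, hstep]
        by_cases hc : (s m).2 ≤ 1
        · simp only [hc, if_pos]
          exact ⟨hk1 _, le_refl _⟩
        · simp only [hc, if_neg, not_false_iff]
          exact ⟨by omega, by omega⟩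
    -- the key step inequalities
    have hkey : ∀ p : ℕ × ℕ, 1 ≤ p.2 → p.2 ≤ k p.1 →
        val p ≤ 4 • val (step p) ∧ 2 • val (step p) ≤ val p := by
      rintro ⟨i, j⟩ hj1 hjk
      dsimp only at hj1 hjk
      by_cases hc : j ≤ 1
      · -- j = 1 : move to next block, value a (i+1)
        have hj : j = 1 := by omega
        have hstepval : val (step (i, j)) = a (i + 1) := by
          rw [hstep, hval]
          simp [hc]
        rw [hstepval]
        by_cases hjk' : j = k i
        · -- k i = 1 : a i ≤ 4 • a(i+1) < 2^2 • a(i+1), and 2 • a(i+1) ≤ a i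
          have hvp : val (i, j) = a i := by rw [hval]; simp [hjk']
          rw [hvp]
          constructor
          · have := hkmax i
            rw [← hjk', hj] at this
            calc a i ≤ 2 ^ 2 • a (i + 1) := this.le
              _ = 4 • a (i + 1) := by norm_num
          · exact hge i
        · -- value is 2^1 • a(i+1) = 2 • a(i+1)
          have hvp : val (i, j) = 2 • a (i + 1) := by
            rw [hval]
            simp only [hjk', if_neg, not_false_iff]
            rw [hj]; norm_num
          rw [hvp]
          constructor
          · exact nsmul_le_nsmul_left (hnonneg (i + 1)) (by omega)
          · exact le_refl _
      · -- j ≥ 2 : move down within block to (i, j-1), value 2^(j-1) • a(i+1)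
        have hstepeq : step (i, j) = (i, j - 1) := by rw [hstep]; simp [hc]
        have hj2 : 2 ≤ j := by omega
        have hstepval : val (step (i, j)) = 2 ^ (j - 1) • a (i + 1) := by
          rw [hstepeq, hval]
          have : j - 1 ≠ k i := by omega
          simp [this]
        rw [hstepval]
        have h4eq : 4 • (2 ^ (j - 1) • a (i + 1)) = 2 ^ (j + 1) • a (i + 1) := by
          rw [smul_smul]
          congr 1
          have : j - 1 + 2 = j + 1 := by omega
          calc 4 * 2 ^ (j - 1) = 2 ^ (j - 1 + 2) := by ring
            _ = 2 ^ (j + 1) := by rw [this]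
        have h2eq : 2 • (2 ^ (j - 1) • a (i + 1)) = 2 ^ j • a (i + 1) := by
          rw [smul_smul]
          congr 1
          have : j - 1 + 1 = j := by omega
          calc 2 * 2 ^ (j - 1) = 2 ^ (j - 1 + 1) := by ring
            _ = 2 ^ j := by rw [this]
        rw [h4eq, h2eq]
        by_cases hjk' : j = k i
        · have hvp : val (i, j) = a i := by rw [hval]; simp [hjk']
          rw [hvp]
          refine ⟨?_, ?_⟩
          · have := hkmax i
            rw [← hjk'] at this
            exact this.le
          · have := hkspec i
            rw [← hjk'] at this
            exact this
        · have hvp : val (i, j) = 2 ^ j • a (i + 1) := by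
            rw [hval]; simp [hjk']
          rw [hvp]
          exact ⟨nsmul_le_nsmul_left (hnonneg (i + 1)) (Nat.pow_le_pow_right (by omega) (by omega)),
            le_refl _⟩
    refine ⟨fun m => val (s m), ?_, ?_⟩
    · show 0 < val (s 0)
      have h0 : s 0 = (0, k 0) := rfl
      have : val (0, k 0) = a 0 := by rw [hval]; simp
      rw [h0, this]
      exact hpos 0
    · intro m
      show val (s m) ≤ 4 • val (s (m + 1)) ∧ 2 • val (s (m + 1)) ≤ val (s m)
      have hsucc : s (m + 1) = step (s m) := Function.iterate_succ_apply' _ _ _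
      rw [hsucc]
      exact hkey (s m) (hinv m).1 (hinv m).2
  · rintro ⟨a, h0, h⟩
    exact ⟨a, fun hall => absurd (hall 0) (ne_of_gt h0), fun i =>
      ⟨4, le_refl 4, (h i).1, (h i).2⟩⟩
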